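/- For positive integers l, m and nonnegative integer p, the sum of q^{x_1+...+x_m} over weakly increasing nonnegative integer tuples with x_m ≤ p + min(x_1, l−1) and additionally x_1 ≤ l−2 equals (1 + q^m + q^{2m} + ... + q^{(l−2)m}) · [p+m−1 choose m−1]_q. -/

import Mathlib

open Finset

noncomputable def q : RatFunc ℚ := RatFunc.X

noncomputable def qInt (n : ℕ) : RatFunc ℚ := ∑ i ∈ Finset.range n, q ^ i

noncomputable def qPoch (n : ℕ) : RatFunc ℚ := ∏ i ∈ Finset.range n, (1 - q ^ (i + 1))

noncomputable def qb (n m : ℕ) : RatFunc ℚ := qPoch n / (qPoch m * qPoch (n - m))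

noncomputable def Pq (n k : ℕ) : RatFunc ℚ :=
  ∑ x ∈ (Finset.univ : Finset (Fin k → Fin (n+1))).filter (fun x => Monotone x),
    q ^ (∑ i, (x i : ℕ))

lemma fac_ne (i : ℕ) : (1 - q ^ (i + 1)) ≠ 0 := by
  have : (1 : Polynomial ℚ) - Polynomial.X ^ (i+1) ≠ 0 := by
    intro h
    have := congrArg (Polynomial.eval 0) h
    simp at this
  have h2 : (1 - q ^ (i+1)) = RatFunc.mk ((1 : Polynomial ℚ) - Polynomial.X ^ (i+1)) 1 := by
    simp [q, RatFunc.mk_one, ← RatFunc.algebraMap_X, map_sub, map_pow, map_one]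
  rw [h2, RatFunc.mk_one]
  exact RatFunc.algebraMap_ne_zero this

lemma qPoch_ne (n : ℕ) : qPoch n ≠ 0 := by
  unfold qPoch
  exact Finset.prod_ne_zero_iff.mpr (fun i _ => fac_ne i)

lemma qPoch_succ (n : ℕ) : qPoch (n+1) = qPoch n * (1 - q ^ (n+1)) := by
  unfold qPoch; rw [Finset.prod_range_succ]

lemma qb_zero (n : ℕ) : qb n 0 = 1 := by
  unfold qb qPoch
  simp [div_self, Finset.prod_ne_zero_iff.mpr (fun i _ => fac_ne i)]

lemma qb_pascal (n k : ℕ) :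
    qb (n+k+2) (k+1) = qb (n+k+1) (k+1) + q^(n+1) * qb (n+k+1) k := by
  unfold qb
  have h1 : n+k+2-(k+1) = n+1 := by omega
  have h2 : n+k+1-(k+1) = n := by omega
  have h3 : n+k+1-k = n+1 := by omega
  rw [h1, h2, h3]
  rw [show n+k+2 = (n+k+1)+1 from rfl, qPoch_succ (n+k+1), qPoch_succ n, qPoch_succ k]
  field_simp [qPoch_ne, fac_ne]
  ring

lemma Pq_zero_right (n : ℕ) : Pq n 0 = 1 := by
  unfold Pq
  have h : (Finset.univ : Finset (Fin 0 → Fin (n+1))).filter (fun x => Monotone x) = univ :=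
    Finset.filter_true_of_mem (fun x _ => by intro a; exact a.elim0)
  rw [h]
  simp

lemma Pq_zero_left (k : ℕ) : Pq 0 k = 1 := by
  unfold Pq
  have h : (Finset.univ : Finset (Fin k → Fin 1)).filter (fun x => Monotone x) = univ :=
    Finset.filter_true_of_mem (fun x _ a b _ => le_of_eq (Subsingleton.elim _ _))
  rw [h]
  have h3 : ∀ x : Fin k → Fin 1, q ^ (∑ i, (x i : ℕ)) = 1 := by
    intro x
    have h2 : ∀ i, ((x i : ℕ)) = 0 := fun i => by omega
    simp [h2]
  rw [Finset.sum_congr rfl (fun x _ => h3 x)]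
  simp

lemma Pq_rec (n k : ℕ) :
    Pq (n+1) (k+1) = Pq n (k+1) + q^(n+1) * Pq (n+1) k := by
  have key := Finset.sum_filter_add_sum_filter_not
    ((Finset.univ : Finset (Fin (k+1) → Fin (n+2))).filter (fun x => Monotone x))
    (fun x => x (Fin.last k) = Fin.last (n+1))
    (fun x => q ^ (∑ i, (x i : ℕ)))
  rw [Finset.filter_filter, Finset.filter_filter] at key
  have hA : ∑ x ∈ Finset.filter (fun a => Monotone a ∧ a (Fin.last k) = Fin.last (n+1))
      (Finset.univ : Finset (Fin (k+1) → Fin (n+2))), q ^ (∑ i, (x i : ℕ))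
      = q^(n+1) * Pq (n+1) k := by
    unfold Pq
    rw [Finset.mul_sum]
    refine Finset.sum_bij' (fun x _ => fun i : Fin k => x i.castSucc)
      (fun y _ => Fin.snoc y (Fin.last (n+1))) ?_ ?_ ?_ ?_ ?_
    · intro x hx
      simp only [Finset.mem_filter, Finset.mem_univ, true_and] at hx ⊢
      exact fun a b hab => hx.1 (Fin.castSucc_le_castSucc_iff.mpr hab)
    · intro y hy
      simp only [Finset.mem_filter, Finset.mem_univ, true_and] at hy ⊢
      constructor
      · intro a b hab
        induction b using Fin.lastCases with
        | last => rw [Fin.snoc_last]; exact Fin.le_last _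
        | cast j =>
          induction a using Fin.lastCases with
          | last => exact absurd hab (not_le.mpr (Fin.castSucc_lt_last j))
          | cast i =>
            rw [Fin.snoc_castSucc, Fin.snoc_castSucc]
            exact hy (Fin.castSucc_le_castSucc_iff.mp hab)
      · simp
    · intro x hx
      simp only [Finset.mem_filter, Finset.mem_univ, true_and] at hx
      funext i
      induction i using Fin.lastCases with
      | last => simp [hx.2]
      | cast j => simp
    · intro y hy
      funext i
      simp
    · intro x hx
      simp only [Finset.mem_filter, Finset.mem_univ, true_and] at hx
      rw [Fin.sum_univ_castSucc, hx.2]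
      simp [pow_add, mul_comm]
  have hB : ∑ x ∈ Finset.filter (fun a => Monotone a ∧ ¬ a (Fin.last k) = Fin.last (n+1))
      (Finset.univ : Finset (Fin (k+1) → Fin (n+2))), q ^ (∑ i, (x i : ℕ))
      = Pq n (k+1) := by
    unfold Pq
    refine Finset.sum_bij' (fun x hx => fun i : Fin (k+1) =>
        (⟨(x i : ℕ), by
          simp only [Finset.mem_filter, Finset.mem_univ, true_and] at hx
          have h1 : x i ≤ x (Fin.last k) := hx.1 (Fin.le_last i)
          have h2 : (x (Fin.last k) : ℕ) < n + 1 := by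
            have h3 : (x (Fin.last k) : ℕ) < n + 2 := (x (Fin.last k)).isLt
            rcases Nat.lt_or_ge ((x (Fin.last k) : ℕ)) (n+1) with h | h
            · exact h
            · exact absurd (Fin.ext (by omega : (x (Fin.last k) : ℕ) = n + 1)) hx.2
          exact lt_of_le_of_lt h1 h2⟩ : Fin (n+1)))
      (fun y _ => fun i => (y i).castSucc) ?_ ?_ ?_ ?_ ?_
    · intro x hx
      simp only [Finset.mem_filter, Finset.mem_univ, true_and] at hx ⊢
      intro a b hab
      exact hx.1 hab
    · intro y hy
      simp only [Finset.mem_filter, Finset.mem_univ, true_and] at hy ⊢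
      constructor
      · intro a b hab
        exact Fin.castSucc_le_castSucc_iff.mpr (hy hab)
      · intro h
        have := congrArg Fin.val h
        simp at this
        omega
    · intro x hx; funext i; exact Fin.ext rfl
    · intro y hy; funext i; exact Fin.ext rfl
    · intro x hx; rfl
  rw [hA, hB] at key
  have hdef : Pq (n+1) (k+1) = ∑ x ∈ (Finset.univ : Finset (Fin (k+1) → Fin (n+2))).filter
      (fun x => Monotone x), q ^ (∑ i, (x i : ℕ)) := rfl
  rw [hdef, ← key, add_comm]

lemma qb_self (n : ℕ) : qb n n = 1 := by
  unfold qb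
  rw [Nat.sub_self]
  show qPoch n / (qPoch n * qPoch 0) = 1
  have : qPoch 0 = 1 := by unfold qPoch; simp
  rw [this, mul_one, div_self (qPoch_ne n)]

lemma Pq_eq (k n : ℕ) : Pq n k = qb (n+k) k := by
  induction k generalizing n with
  | zero => rw [Pq_zero_right, Nat.add_zero, qb_zero]
  | succ k ihk =>
    induction n with
    | zero => rw [Pq_zero_left, Nat.zero_add, qb_self]
    | succ n ihn =>
      rw [Pq_rec, ihn, ihk (n+1)]
      rw [show n+1+(k+1) = n+k+2 by ring, show n+(k+1) = n+k+1 by ring,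
        show n+1+k = n+k+1 by ring, qb_pascal]

theorem stmt8 (l m p : ℕ) (hl : 0 < l) (hm : 0 < m) :
    ∑ x ∈ (Finset.univ : Finset (Fin m → Fin (p + l))).filter
        (fun x => Monotone x ∧
          (x ⟨m - 1, by omega⟩).val ≤ p + min (x ⟨0, hm⟩).val (l - 1) ∧
          (x ⟨0, hm⟩).val < l - 1),
      q ^ (∑ i : Fin m, (x i : ℕ)) =
    (∑ k ∈ Finset.range (l - 1), q ^ (k * m)) * qb (p + m - 1) (m - 1) := by
  rcases m with _ | m'
  · omega
  rcases l with _ | l'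
  · omega
  have hb : qb (p + (m'+1) - 1) ((m'+1) - 1) = Pq p m' := by
    rw [Pq_eq]
    congr 1 <;> omega
  rw [hb]
  have hmaps : ∀ x ∈ (Finset.univ : Finset (Fin (m'+1) → Fin (p + (l'+1)))).filter
      (fun x => Monotone x ∧
        (x ⟨(m'+1) - 1, by omega⟩).val ≤ p + min (x ⟨0, hm⟩).val ((l'+1) - 1) ∧
        (x ⟨0, hm⟩).val < (l'+1) - 1),
      (x ⟨0, hm⟩).val ∈ Finset.range ((l'+1) - 1) := by
    intro x hx
    simp only [Finset.mem_filter, Finset.mem_univ, true_and] at hx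
    exact Finset.mem_range.mpr hx.2.2
  rw [← Finset.sum_fiberwise_of_maps_to hmaps (fun x => q ^ (∑ i, (x i : ℕ))),
    Finset.sum_mul]
  refine Finset.sum_congr rfl ?_
  intro j hj
  have hjl : j < l' := by simpa using hj
  have hjP : j < p + (l'+1) := by omega
  unfold Pq
  rw [Finset.mul_sum]
  refine Finset.sum_bij' (fun x hx => fun i : Fin m' =>
      (⟨(x i.succ).val - j, by
        simp only [Finset.mem_filter, Finset.mem_univ, true_and] at hx
        have hmono := hx.1.1
        have hle : x i.succ ≤ x ⟨(m'+1) - 1, by omega⟩ := hmono (by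
          rw [Fin.le_def]; simp)
        have h0 : (x ⟨0, hm⟩).val = j := hx.2
        have hbd0 := hx.1.2.1
        rw [h0] at hbd0
        have hle' := Fin.le_def.mp hle
        omega⟩ : Fin (p+1)))
    (fun y hy => (Fin.cons (⟨j, hjP⟩ : Fin (p + (l'+1)))
      (fun i : Fin m' => (⟨(y i).val + j, by omega⟩ : Fin (p + (l'+1))))
      : Fin (m'+1) → Fin (p + (l'+1))))
    ?_ ?_ ?_ ?_ ?_
  · -- forward maps into t
    intro x hx
    simp only [Finset.mem_filter, Finset.mem_univ, true_and] at hx ⊢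
    intro a b hab
    have h := Fin.le_def.mp (hx.1.1 (Fin.succ_le_succ_iff.mpr hab))
    show (x a.succ).val - j ≤ (x b.succ).val - j
    omega
  · -- inverse maps into s
    intro y hy
    simp only [Finset.mem_filter, Finset.mem_univ, true_and] at hy ⊢
    set z : Fin (m'+1) → Fin (p + (l'+1)) := Fin.cons (⟨j, hjP⟩ : Fin (p + (l'+1)))
      (fun i : Fin m' => (⟨(y i).val + j, by omega⟩ : Fin (p + (l'+1)))) with hz
    have hz0v : (z 0).val = j := by simp only [hz, Fin.cons_zero]
    have hzsv : ∀ i : Fin m', (z i.succ).val = (y i).val + j := by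
      intro i; simp only [hz, Fin.cons_succ]
    have hz0 : (z ⟨0, hm⟩).val = j := hz0v
    have hall : ∀ i, (z i).val ≤ p + j := by
      intro i
      induction i using Fin.cases with
      | zero => omega
      | succ i =>
        have h1 := (y i).isLt
        rw [hzsv i]
        omega
    refine ⟨⟨?_, ?_, ?_⟩, hz0⟩
    · intro a b hab
      induction b using Fin.cases with
      | zero =>
        induction a using Fin.cases with
        | zero => exact le_refl _
        | succ i => exact absurd (Fin.le_def.mp hab) (by simp)
      | succ b =>
        induction a using Fin.cases with
        | zero =>
          rw [Fin.le_def, hz0v, hzsv b]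
          omega
        | succ a =>
          have hab' : a ≤ b := Fin.succ_le_succ_iff.mp hab
          have h := Fin.le_def.mp (hy hab')
          rw [Fin.le_def, hzsv a, hzsv b]
          omega
    · rw [hz0]
      have h1 := hall ⟨(m'+1) - 1, by omega⟩
      have h2 : min j ((l'+1) - 1) = j := by omega
      omega
    · rw [hz0]; omega
  · -- left inverse
    intro x hx
    simp only [Finset.mem_filter, Finset.mem_univ, true_and] at hx
    have h0 : (x ⟨0, hm⟩).val = j := hx.2
    have hle0 : ∀ i : Fin m', j ≤ (x i.succ).val := by
      intro i
      have h := Fin.le_def.mp (hx.1.1 (show (⟨0, hm⟩ : Fin (m'+1)) ≤ i.succ by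
        rw [Fin.le_def]; simp))
      omega
    funext i
    induction i using Fin.cases with
    | zero =>
      simp only [Fin.cons_zero]
      exact Fin.ext (show j = (x 0).val from h0.symm)
    | succ i =>
      simp only [Fin.cons_succ]
      exact Fin.ext (Nat.sub_add_cancel (hle0 i))
  · -- right inverse
    intro y hy
    funext i
    simp only [Fin.cons_succ]
    exact Fin.ext (show (y i).val + j - j = (y i).val by omega)
  · -- summand equality
    intro x hx
    simp only [Finset.mem_filter, Finset.mem_univ, true_and] at hx
    have h0 : (x ⟨0, hm⟩).val = j := hx.2
    have hle0 : ∀ i : Fin m', j ≤ (x i.succ).val := by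
      intro i
      have h := Fin.le_def.mp (hx.1.1 (show (⟨0, hm⟩ : Fin (m'+1)) ≤ i.succ by
        rw [Fin.le_def]; simp))
      omega
    have hx0 : (x 0).val = j := h0
    have hE : ∑ i : Fin (m'+1), (x i).val
        = j*(m'+1) + ∑ i : Fin m', ((x i.succ).val - j) := by
      rw [Fin.sum_univ_succ]
      have hsum : ∑ i : Fin m', (x i.succ).val
          = ∑ i : Fin m', (((x i.succ).val - j) + j) := by
        refine Finset.sum_congr rfl fun i _ => ?_
        have := hle0 i
        omega
      rw [hx0, hsum, Finset.sum_add_distrib, Finset.sum_const, Finset.card_univ,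
        Fintype.card_fin, smul_eq_mul]
      ring
    show q ^ (∑ i : Fin (m'+1), (x i).val)
        = q ^ (j*(m'+1)) * q ^ (∑ i : Fin m', ((x i.succ).val - j))
    rw [hE, pow_add]
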